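/- Let $S_T$ be lognormally distributed with density $g(y) = \frac{1}{y \tilde\sigma \sqrt{2\pi}} \exp(-(\ln y - \mu)^2/(2\tilde\sigma^2))$ on $(0,\infty)$, where $\tilde\sigma > 0$ and $\mu \in \mathbb{R}$. Then $\int_0^\infty g'(y)^2\,dy = \frac{e^{-3\mu + \frac{9}{4}\tilde\sigma^2}}{8\sqrt{\pi}} \cdot \frac{\tilde\sigma^2 + 2}{\tilde\sigma^3}$. -/

import Mathlib

open Real MeasureTheory Set in
private lemma lognormal_aux_gauss1 {b : ℝ} : ∫ x : ℝ, x * Real.exp (-b * x^2) = 0 := by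
  have h := integral_neg_eq_self (fun x : ℝ => x * Real.exp (-b * x^2)) volume
  simp only [neg_mul, neg_sq, neg_neg] at h
  rw [integral_neg] at h
  simp only [neg_mul]
  linarith

open Real MeasureTheory Set in
private lemma lognormal_aux_gauss2 {b : ℝ} (hb : 0 < b) :
    ∫ x : ℝ, x^2 * Real.exp (-b * x^2) = Real.sqrt π / (2 * b * Real.sqrt b) := by
  have h := integral_rpow_mul_exp_neg_mul_rpow (p := 2) (q := 2) (b := b) two_pos
    (by norm_num) hb
  norm_num at h
  have hG : Real.Gamma (3/2) = Real.sqrt π / 2 := by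
    rw [show (3/2 : ℝ) = 1/2 + 1 by norm_num, Real.Gamma_add_one (by norm_num),
      Real.Gamma_one_half_eq]
    ring
  have hbpow : b ^ (-(3/2) : ℝ) = (b * Real.sqrt b)⁻¹ := by
    rw [show (-(3/2) : ℝ) = -(1 + 1/2) by norm_num, Real.rpow_neg hb.le,
      Real.rpow_add hb, Real.rpow_one, ← Real.sqrt_eq_rpow]
  have hfull : ∫ x : ℝ, x^2 * Real.exp (-b * x^2)
      = 2 * ∫ x in Ioi (0:ℝ), x^2 * Real.exp (-b * x^2) := by
    rw [← integral_comp_abs (f := fun x => x^2 * Real.exp (-b * x^2))]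
    simp [sq_abs]
  simp only [neg_mul] at hfull ⊢
  rw [hfull, h, hG, hbpow]
  have h1 : Real.sqrt b ≠ 0 := ne_of_gt (Real.sqrt_pos.mpr hb)
  field_simp

open Real MeasureTheory Set in
private lemma lognormal_aux_keyint {σ : ℝ} (hσ : 0 < σ) :
    ∫ u : ℝ, Real.exp (-(σ^2)⁻¹ * u^2) * (u/σ^2 - 1/2)^2
      = Real.sqrt π * (σ^2 + 2) / (4 * σ) := by
  have hb : (0:ℝ) < (σ^2)⁻¹ := by positivity
  have h2 : Integrable fun u : ℝ => u^2 * Real.exp (-(σ^2)⁻¹ * u^2) := by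
    have := integrable_rpow_mul_exp_neg_mul_sq hb (s := 2) (by norm_num)
    simp only [Real.rpow_two, ← neg_mul] at this
    exact this
  have h1 : Integrable fun u : ℝ => u * Real.exp (-(σ^2)⁻¹ * u^2) :=
    integrable_mul_exp_neg_mul_sq hb
  have h0 : Integrable fun u : ℝ => Real.exp (-(σ^2)⁻¹ * u^2) :=
    integrable_exp_neg_mul_sq hb
  have heq : ∀ u : ℝ, Real.exp (-(σ^2)⁻¹ * u^2) * (u/σ^2 - 1/2)^2
      = (σ^4)⁻¹ * (u^2 * Real.exp (-(σ^2)⁻¹ * u^2))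
        + ((-(σ^2)⁻¹) * (u * Real.exp (-(σ^2)⁻¹ * u^2))
          + (1/4) * Real.exp (-(σ^2)⁻¹ * u^2)) := by
    intro u
    have hσ2 : σ ≠ 0 := ne_of_gt hσ
    field_simp
    ring
  simp only [heq]
  have hI0 : Integrable (fun u : ℝ => (1/4 : ℝ) * Real.exp (-(σ^2)⁻¹ * u^2)) :=
    h0.const_mul _
  have hI1 : Integrable (fun u : ℝ => -(σ^2)⁻¹ * (u * Real.exp (-(σ^2)⁻¹ * u^2))) :=
    h1.const_mul _
  have hI12 : Integrable (fun u : ℝ => -(σ^2)⁻¹ * (u * Real.exp (-(σ^2)⁻¹ * u^2))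
      + (1/4 : ℝ) * Real.exp (-(σ^2)⁻¹ * u^2)) := hI1.add hI0
  rw [integral_add ((h2.const_mul _)) hI12,
    integral_add hI1 hI0,
    integral_const_mul, integral_const_mul, integral_const_mul,
    lognormal_aux_gauss2 hb, lognormal_aux_gauss1, integral_gaussian]
  have hsq : Real.sqrt ((σ^2)⁻¹) = σ⁻¹ := by
    rw [Real.sqrt_inv, Real.sqrt_sq hσ.le]
  have hdiv : Real.sqrt (π / (σ^2)⁻¹) = Real.sqrt π * σ := by
    rw [div_inv_eq_mul, Real.sqrt_mul Real.pi_pos.le, Real.sqrt_sq hσ.le]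
  rw [hsq, hdiv]
  have hσ2 : σ ≠ 0 := ne_of_gt hσ
  field_simp
  ring

open Real in
/-- the squared `L²`-norm of the derivative of the lognormal density. -/
theorem lognormal_density_deriv_L2 (μ σ : ℝ) (hσ : 0 < σ) (g : ℝ → ℝ)
    (hg : ∀ y > (0 : ℝ),
      g y = (y * σ * Real.sqrt (2 * π))⁻¹ *
        Real.exp (-(Real.log y - μ) ^ 2 / (2 * σ ^ 2))) :
    ∫ y in Set.Ioi (0 : ℝ), (deriv g y) ^ 2 =
      Real.exp (-3 * μ + 9 / 4 * σ ^ 2) / (8 * Real.sqrt π) *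
        ((σ ^ 2 + 2) / σ ^ 3) := by
  open MeasureTheory Set in
  have hσ0 : σ ≠ 0 := ne_of_gt hσ
  set C : ℝ := (σ * Real.sqrt (2 * π))⁻¹ with hC
  -- Step 1: the derivative on `Ioi 0`
  have hderiv : ∀ y ∈ Ioi (0:ℝ), deriv g y
      = -(C * (y^2)⁻¹ *
          Real.exp (-(Real.log y - μ)^2/(2*σ^2)) * (1 + (Real.log y - μ)/σ^2)) := by
    intro y hy
    have hy0 : (0:ℝ) < y := hy
    have hgg : g =ᶠ[nhds y]
        fun z => C * (z⁻¹ * Real.exp (-(Real.log z - μ)^2/(2*σ^2))) := by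
      filter_upwards [isOpen_Ioi.mem_nhds hy] with z hz
      rw [hg z hz, mul_inv, mul_inv, hC, mul_inv]
      ring
    have hlog := Real.hasDerivAt_log (ne_of_gt hy0)
    have hE : HasDerivAt (fun z => -(Real.log z - μ)^2/(2*σ^2))
        (-((2:ℕ) * (Real.log y - μ)^1 * y⁻¹)/(2*σ^2)) y :=
      (((hlog.sub_const μ).pow 2).neg).div_const _
    have hexp := hE.exp
    have hinv := hasDerivAt_inv (ne_of_gt hy0)
    have hmul : HasDerivAt (fun z => C * (z⁻¹ * Real.exp (-(Real.log z - μ)^2/(2*σ^2)))) _ y :=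
      (hinv.mul hexp).const_mul C
    rw [hgg.deriv_eq, hmul.deriv]
    have hyne : y ≠ 0 := ne_of_gt hy0
    field_simp
    ring
  -- Step 2: rewrite the integrand on `Ioi 0`
  set F : ℝ → ℝ := fun y => C^2 * ((y^2)^2)⁻¹ *
    (Real.exp (-(Real.log y - μ)^2/(2*σ^2)))^2 * (1 + (Real.log y - μ)/σ^2)^2 with hF
  have hstep2 : ∫ y in Ioi (0:ℝ), (deriv g y)^2 = ∫ y in Ioi (0:ℝ), F y := by
    refine setIntegral_congr_fun measurableSet_Ioi (fun y hy => ?_)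
    rw [hderiv y hy, hF]
    ring
  -- Step 3: substitution `y = exp x`
  have hsub : ∫ y in Ioi (0:ℝ), F y = ∫ x : ℝ, Real.exp x * F (Real.exp x) := by
    have h := integral_image_eq_integral_abs_deriv_smul (s := univ) (f := Real.exp)
      (f' := Real.exp) MeasurableSet.univ
      (fun x _ => (Real.hasDerivAt_exp x).hasDerivWithinAt)
      (Real.exp_injective.injOn) F
    rw [image_univ, Real.range_exp] at h
    rw [h, Measure.restrict_univ]
    congr 1
    funext x
    rw [abs_of_pos (Real.exp_pos x), smul_eq_mul]
  -- Step 4: translation by `m = μ - 3/2 σ²` and reduction to a Gaussian integral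
  set m : ℝ := μ - 3/2 * σ^2 with hm
  set K : ℝ := Real.exp (-3 * μ + 9 / 4 * σ ^ 2) with hK
  have hshift : ∫ x : ℝ, Real.exp x * F (Real.exp x)
      = ∫ u : ℝ, Real.exp (u + m) * F (Real.exp (u + m)) :=
    (integral_add_right_eq_self (fun x => Real.exp x * F (Real.exp x)) m).symm
  have hpt : ∀ u : ℝ, Real.exp (u + m) * F (Real.exp (u + m))
      = C^2 * K * (Real.exp (-(σ^2)⁻¹ * u^2) * (u/σ^2 - 1/2)^2) := by
    intro u
    rw [hF]
    simp only [Real.log_exp]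
    rw [show (((Real.exp (u + m))^2)^2)⁻¹ = Real.exp (-(4*(u+m))) by
      rw [← Real.exp_nat_mul, ← Real.exp_nat_mul, ← Real.exp_neg]; congr 1; push_cast; ring]
    rw [show (Real.exp (-(u + m - μ)^2/(2*σ^2)))^2 = Real.exp (-(u + m - μ)^2/σ^2) by
      rw [← Real.exp_nat_mul]; congr 1; field_simp; ring]
    rw [show Real.exp (u+m) * (C ^ 2 * Real.exp (-(4*(u+m))) *
          Real.exp (-(u + m - μ)^2/σ^2) * (1 + (u + m - μ)/σ^2)^2)
        = C^2 * (Real.exp (u+m) * Real.exp (-(4*(u+m))) * Real.exp (-(u + m - μ)^2/σ^2))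
            * (1 + (u + m - μ)/σ^2)^2 from by ring,
      ← Real.exp_add, ← Real.exp_add, hK,
      show C^2 * K * (Real.exp (-(σ^2)⁻¹ * u^2) * (u/σ^2 - 1/2)^2)
        = C^2 * (Real.exp (-3 * μ + 9 / 4 * σ ^ 2) * Real.exp (-(σ^2)⁻¹ * u^2))
            * (u/σ^2 - 1/2)^2 from by rw [hK]; ring,
      ← Real.exp_add]
    rw [show u + m + -(4*(u+m)) + -(u + m - μ)^2/σ^2
        = -3 * μ + 9 / 4 * σ ^ 2 + -(σ^2)⁻¹ * u^2 from by rw [hm]; field_simp; ring,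
      show (1 + (u + m - μ)/σ^2)^2 = (u/σ^2 - 1/2)^2 from by rw [hm]; field_simp; ring]
  rw [hstep2, hsub, hshift]
  simp only [hpt]
  rw [integral_const_mul, lognormal_aux_keyint hσ]
  -- Final arithmetic
  have hπ : Real.sqrt π * Real.sqrt π = π := Real.mul_self_sqrt Real.pi_pos.le
  have hπ0 : Real.sqrt π ≠ 0 := ne_of_gt (Real.sqrt_pos.mpr Real.pi_pos)
  have hC2 : C^2 = (σ^2 * (2 * (Real.sqrt π * Real.sqrt π)))⁻¹ := by
    rw [hC, inv_pow, mul_pow, Real.sq_sqrt (by positivity : (0:ℝ) ≤ 2*π), hπ]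
  rw [hC2, hK]
  field_simp
  ring
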